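/- Let f : ℝ → ℝ be convex with bounded right derivative f'_+, and let μ be the measure on ℝ defined by μ[a, b) = f'_−(b) − f'_−(a) (the second derivative measure), assumed supported in a compact interval I. Then there exist constants α and β such that f(x) = (1/2)∫_I |x − a| μ(da) + αx + β for all x ∈ ℝ. -/

import Mathlib

open MeasureTheory

/-- Left derivative. -/
noncomputable def leftDeriv (f : ℝ → ℝ) (x : ℝ) : ℝ := derivWithin f (Set.Iio x) x

/-- Right derivative. -/
noncomputable def rightDeriv (f : ℝ → ℝ) (x : ℝ) : ℝ := derivWithin f (Set.Ioi x) x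

open Set Filter Topology
open scoped ENNReal

section OneSided

variable {f : ℝ → ℝ}

lemma my_slope_adj (hf : ConvexOn ℝ Set.univ f) {x y z : ℝ} (hxy : x < y) (hyz : y < z) :
    slope f x y ≤ slope f y z := by
  simpa [slope_def_field] using hf.slope_mono_adjacent (trivial : x ∈ univ) trivial hxy hyz

/-- slopes are monotone across a point -/
lemma my_slope_mono (hf : ConvexOn ℝ Set.univ f) {u x y v : ℝ}
    (hu : u < x) (hx : x ≤ y) (hv : y < v) :
    slope f u x ≤ slope f y v := by
  rcases eq_or_lt_of_le hx with rfl | hx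
  · exact my_slope_adj hf hu hv
  · exact (my_slope_adj hf hu hx).trans (my_slope_adj hf hx hv)

lemma my_slope_mono_right (hf : ConvexOn ℝ Set.univ f) {x u v : ℝ} (hu : x < u) (huv : u ≤ v) :
    slope f x u ≤ slope f x v := by
  have hm := hf.slope_mono (x := x) trivial
  exact hm (show u ∈ univ \ {x} by simp [hu.ne']) (show v ∈ univ \ {x} by
    simp [(hu.trans_le huv).ne']) huv

lemma my_slope_mono_left (hf : ConvexOn ℝ Set.univ f) {x u v : ℝ} (huv : u ≤ v) (hv : v < x) :
    slope f u x ≤ slope f v x := by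
  have hm := hf.slope_mono (x := x) trivial
  rw [slope_comm f u x, slope_comm f v x]
  exact hm (show u ∈ univ \ {x} by simp [(huv.trans_lt hv).ne]) (show v ∈ univ \ {x} by
    simp [hv.ne]) huv

lemma bddBelow_right_slopes (hf : ConvexOn ℝ Set.univ f) (x : ℝ) :
    BddBelow (slope f x '' Ioi x) := by
  refine ⟨slope f (x - 1) x, ?_⟩
  rintro - ⟨y, hy, rfl⟩
  exact my_slope_mono hf (by linarith) le_rfl hy

lemma bddAbove_left_slopes (hf : ConvexOn ℝ Set.univ f) (x : ℝ) :
    BddAbove (slope f x '' Iio x) := by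
  refine ⟨slope f x (x + 1), ?_⟩
  rintro - ⟨y, hy, rfl⟩
  rw [slope_comm f x y]
  exact my_slope_mono hf hy le_rfl (by linarith)

lemma rightDeriv_eq_sInf (hf : ConvexOn ℝ Set.univ f) (x : ℝ) :
    rightDeriv f x = sInf (slope f x '' Ioi x) := by
  have hmono : MonotoneOn (slope f x) (Ioi x) := fun u hu v hv huv =>
    my_slope_mono_right hf hu huv
  have htend : Tendsto (slope f x) (𝓝[>] x) (𝓝 (sInf (slope f x '' Ioi x))) :=
    hmono.tendsto_nhdsGT (bddBelow_right_slopes hf x)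
  have h : HasDerivWithinAt f (sInf (slope f x '' Ioi x)) (Set.Ioi x) x := by
    rw [hasDerivWithinAt_iff_tendsto_slope' (by simp : x ∉ Ioi x)]
    exact htend
  exact h.derivWithin (uniqueDiffWithinAt_Ioi x)

lemma hasDerivWithinAt_rightDeriv (hf : ConvexOn ℝ Set.univ f) (x : ℝ) :
    HasDerivWithinAt f (rightDeriv f x) (Set.Ioi x) x := by
  rw [rightDeriv_eq_sInf hf, hasDerivWithinAt_iff_tendsto_slope' (by simp : x ∉ Ioi x)]
  have hmono : MonotoneOn (slope f x) (Ioi x) := fun u hu v hv huv =>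
    my_slope_mono_right hf hu huv
  exact hmono.tendsto_nhdsGT (bddBelow_right_slopes hf x)

lemma leftDeriv_eq_sSup (hf : ConvexOn ℝ Set.univ f) (x : ℝ) :
    leftDeriv f x = sSup (slope f x '' Iio x) := by
  have hmono : MonotoneOn (slope f x) (Iio x) := fun u hu v hv huv => by
    rw [slope_comm f x u, slope_comm f x v]
    exact my_slope_mono_left hf huv hv
  have htend : Tendsto (slope f x) (𝓝[<] x) (𝓝 (sSup (slope f x '' Iio x))) :=
    hmono.tendsto_nhdsLT (bddAbove_left_slopes hf x)
  have h : HasDerivWithinAt f (sSup (slope f x '' Iio x)) (Set.Iio x) x := by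
    rw [hasDerivWithinAt_iff_tendsto_slope' (by simp : x ∉ Iio x)]
    exact htend
  exact h.derivWithin (uniqueDiffWithinAt_Iio x)

lemma hasDerivWithinAt_leftDeriv (hf : ConvexOn ℝ Set.univ f) (x : ℝ) :
    HasDerivWithinAt f (leftDeriv f x) (Set.Iio x) x := by
  rw [leftDeriv_eq_sSup hf, hasDerivWithinAt_iff_tendsto_slope' (by simp : x ∉ Iio x)]
  have hmono : MonotoneOn (slope f x) (Iio x) := fun u hu v hv huv => by
    rw [slope_comm f x u, slope_comm f x v]
    exact my_slope_mono_left hf huv hv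
  exact hmono.tendsto_nhdsLT (bddAbove_left_slopes hf x)

lemma rightDeriv_le_slope (hf : ConvexOn ℝ Set.univ f) {x y : ℝ} (h : x < y) :
    rightDeriv f x ≤ slope f x y := by
  rw [rightDeriv_eq_sInf hf]
  exact csInf_le (bddBelow_right_slopes hf x) ⟨y, h, rfl⟩

lemma slope_le_leftDeriv (hf : ConvexOn ℝ Set.univ f) {x y : ℝ} (h : x < y) :
    slope f x y ≤ leftDeriv f y := by
  rw [leftDeriv_eq_sSup hf, slope_comm f x y]
  exact le_csSup (bddAbove_left_slopes hf y) ⟨x, h, rfl⟩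

lemma leftDeriv_le_rightDeriv (hf : ConvexOn ℝ Set.univ f) (x : ℝ) :
    leftDeriv f x ≤ rightDeriv f x := by
  rw [leftDeriv_eq_sSup hf, rightDeriv_eq_sInf hf]
  refine csSup_le ⟨slope f x (x - 1), ⟨x - 1, by simp, rfl⟩⟩ ?_
  rintro - ⟨u, hu, rfl⟩
  refine le_csInf ⟨slope f x (x + 1), ⟨x + 1, by simp, rfl⟩⟩ ?_
  rintro - ⟨v, hv, rfl⟩
  rw [slope_comm f x u]
  exact my_slope_mono hf hu le_rfl hv

lemma rightDeriv_le_leftDeriv (hf : ConvexOn ℝ Set.univ f) {x y : ℝ} (h : x < y) :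
    rightDeriv f x ≤ leftDeriv f y :=
  (rightDeriv_le_slope hf h).trans (slope_le_leftDeriv hf h)

lemma leftDeriv_mono (hf : ConvexOn ℝ Set.univ f) : Monotone (leftDeriv f) := by
  intro x y hxy
  rcases eq_or_lt_of_le hxy with rfl | h
  · exact le_rfl
  · exact (leftDeriv_le_rightDeriv hf x).trans (rightDeriv_le_leftDeriv hf h)

lemma rightDeriv_mono (hf : ConvexOn ℝ Set.univ f) : Monotone (rightDeriv f) := by
  intro x y hxy
  rcases eq_or_lt_of_le hxy with rfl | h
  · exact le_rfl
  · exact (rightDeriv_le_leftDeriv hf h).trans (leftDeriv_le_rightDeriv hf y)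

lemma abs_leftDeriv_le (hf : ConvexOn ℝ Set.univ f) {M : ℝ} (hM : ∀ x, |rightDeriv f x| ≤ M)
    (x : ℝ) : |leftDeriv f x| ≤ M := by
  rw [abs_le]
  constructor
  · have := (abs_le.1 (hM (x - 1))).1
    linarith [rightDeriv_le_leftDeriv hf (show x - 1 < x by linarith)]
  · have := (abs_le.1 (hM x)).2
    linarith [leftDeriv_le_rightDeriv hf x]

end OneSided

section Part2
variable {f : ℝ → ℝ}

/-- left and right derivatives agree a.e. -/
lemma leftDeriv_ae_eq_rightDeriv (hf : ConvexOn ℝ Set.univ f) :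
    leftDeriv f =ᵐ[volume] rightDeriv f := by
  have hcnt : Set.Countable {x | ¬ContinuousAt (leftDeriv f) x} :=
    (leftDeriv_mono hf).countable_not_continuousAt
  have h0 : volume {x | ¬ContinuousAt (leftDeriv f) x} = 0 := hcnt.measure_zero volume
  have hae : ∀ᵐ x ∂volume, ContinuousAt (leftDeriv f) x := by
    rw [ae_iff]
    simpa using h0
  filter_upwards [hae] with x hx
  refine le_antisymm (leftDeriv_le_rightDeriv hf x) ?_
  have htend : Tendsto (leftDeriv f) (𝓝[>] x) (𝓝 (leftDeriv f x)) :=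
    hx.continuousWithinAt.tendsto
  refine ge_of_tendsto htend ?_
  filter_upwards [self_mem_nhdsWithin] with y hy
  exact rightDeriv_le_leftDeriv hf hy

/-- f is Lipschitz, hence continuous -/
lemma continuous_of_convex (hf : ConvexOn ℝ Set.univ f) {M : ℝ}
    (hM : ∀ x, |rightDeriv f x| ≤ M) : Continuous f := by
  have key : ∀ x y : ℝ, x < y → |f y - f x| ≤ M * (y - x) := by
    intro x y hxy
    have h1 : rightDeriv f x ≤ slope f x y := rightDeriv_le_slope hf hxy
    have h2 : slope f x y ≤ leftDeriv f y := slope_le_leftDeriv hf hxy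
    have h3 := abs_leftDeriv_le hf hM y
    have h4 := (abs_le.1 (hM x)).1
    have h5 := (abs_le.1 h3).2
    have hs : |slope f x y| ≤ M := abs_le.2 ⟨h4.trans h1, h2.trans h5⟩
    rw [slope_def_field] at hs
    have hyx : 0 < y - x := by linarith
    rw [abs_div, abs_of_pos hyx, div_le_iff₀ hyx] at hs
    linarith [hs]
  rw [Metric.continuous_iff]
  intro x ε hε
  have hM0 : 0 ≤ M := (abs_nonneg _).trans (hM 0)
  refine ⟨ε / (M + 1), by positivity, fun y hy => ?_⟩
  rw [Real.dist_eq]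
  rcases lt_trichotomy x y with h | rfl | h
  · calc |f y - f x| ≤ M * (y - x) := key x y h
      _ ≤ (M + 1) * (y - x) := by nlinarith
      _ < ε := by
          rw [Real.dist_eq, abs_of_pos (by linarith : (0:ℝ) < y - x)] at hy
          exact (lt_div_iff₀' (by linarith)).1 hy
  · simpa using hε
  · have := key y x h
    rw [abs_sub_comm]
    calc |f x - f y| ≤ M * (x - y) := this
      _ ≤ (M + 1) * (x - y) := by nlinarith
      _ < ε := by
          rw [Real.dist_eq, abs_of_neg (by linarith : y - x < 0)] at hy
          have := (lt_div_iff₀' (show (0:ℝ) < M + 1 by linarith)).1 hy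
          linarith

/-- FTC for the left derivative of a convex function -/
lemma ftc_leftDeriv (hf : ConvexOn ℝ Set.univ f) {M : ℝ}
    (hM : ∀ x, |rightDeriv f x| ≤ M) {a b : ℝ} (hab : a ≤ b) :
    ∫ t in a..b, leftDeriv f t = f b - f a := by
  have hint : IntegrableOn (rightDeriv f) (Set.Icc a b) volume := by
    have hconst : IntegrableOn (fun _ : ℝ => M) (Set.Icc a b) volume :=
      integrableOn_const measure_Icc_lt_top.ne
    exact hconst.mono' ((rightDeriv_mono hf).measurable.aestronglyMeasurable).restrict
      (Eventually.of_forall fun x => by simpa [Real.norm_eq_abs] using hM x)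
  have hR : ∫ t in a..b, rightDeriv f t = f b - f a := by
    exact intervalIntegral.integral_eq_sub_of_hasDeriv_right_of_le hab
      ((continuous_of_convex hf hM).continuousOn)
      (fun x _ => hasDerivWithinAt_rightDeriv hf x) ((intervalIntegrable_iff_integrableOn_Icc_of_le hab).2 hint)
  rw [← hR]
  refine intervalIntegral.integral_congr_ae ?_
  filter_upwards [leftDeriv_ae_eq_rightDeriv hf] with x hx _
  exact hx

end Part2

/-- If every interval has μ-measure 0 or ∞ and μ is supported on Icc c d,
then ∫ |x-a| over Icc c d is 0. -/
lemma degenerate_integral_zero (μ : Measure ℝ) {c d x : ℝ}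
    (h0 : ∀ a b : ℝ, a ≤ b → μ (Set.Ico a b) = 0 ∨ μ (Set.Ico a b) = ∞)
    (hsupp : μ (Set.Icc c d)ᶜ = 0) :
    ∫ a in Set.Icc c d, |x - a| ∂μ = 0 := by
  set I := Set.Icc c d with hI
  by_cases hInt : Integrable (fun a => |x - a|) (μ.restrict I)
  swap
  · exact integral_undef hInt
  have key : ∀ ε : ℝ, 0 < ε → μ (I ∩ {a | ε ≤ |x - a|}) = 0 := by
    intro ε hε
    have markov : ∀ s : Set ℝ, s ⊆ {a | ε / 2 ≤ |x - a|} → s ⊆ I → μ s < ∞ := by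
      intro s hs1 hs2
      have h1 : (μ.restrict I) {a | ε / 2 ≤ |x - a|} < ∞ :=
        hInt.measure_ge_lt_top (by linarith)
      refine lt_of_le_of_lt ?_ h1
      rw [Measure.restrict_apply₀']
      · exact measure_mono (subset_inter hs1 hs2)
      · exact measurableSet_Icc.nullMeasurableSet
    -- the two outer intervals have measure 0
    have hA : μ (Set.Ico c (x - ε / 2)) = 0 := by
      have hAI : μ (Set.Ico c (x - ε / 2)) = μ (Set.Ico c (x - ε / 2) ∩ I) := by
        have : μ (Set.Ico c (x - ε / 2) \ I) = 0 :=
          measure_mono_null (diff_subset_compl _ _) hsupp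
        have h2 := measure_inter_add_diff (Set.Ico c (x - ε / 2)) (μ := μ)
          (measurableSet_Icc : MeasurableSet I)
        rw [← h2, this, add_zero]
      rcases le_or_gt (x - ε / 2) c with hcx | hcx
      · rw [Set.Ico_eq_empty (by simpa using hcx.not_gt)]; simp
      rcases h0 c (x - ε / 2) hcx.le with h | h
      · exact h
      · exfalso
        have hfin : μ (Set.Ico c (x - ε / 2) ∩ I) < ∞ := by
          refine markov _ ?_ inter_subset_right
          rintro a ⟨⟨-, ha2⟩, -⟩
          simp only [mem_setOf_eq]
          have : ε / 2 ≤ x - a := by linarith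
          exact this.trans (le_abs_self _)
        rw [hAI] at h
        exact hfin.ne h
    have hB : μ (Set.Ico (x + ε / 2) (d + 1)) = 0 := by
      have hBI : μ (Set.Ico (x + ε / 2) (d + 1)) = μ (Set.Ico (x + ε / 2) (d + 1) ∩ I) := by
        have : μ (Set.Ico (x + ε / 2) (d + 1) \ I) = 0 :=
          measure_mono_null (diff_subset_compl _ _) hsupp
        have h2 := measure_inter_add_diff (Set.Ico (x + ε / 2) (d + 1)) (μ := μ)
          (measurableSet_Icc : MeasurableSet I)
        rw [← h2, this, add_zero]
      rcases le_or_gt (d + 1) (x + ε / 2) with hcx | hcx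
      · rw [Set.Ico_eq_empty (by simpa using hcx.not_gt)]; simp
      rcases h0 (x + ε / 2) (d + 1) hcx.le with h | h
      · exact h
      · exfalso
        have hfin : μ (Set.Ico (x + ε / 2) (d + 1) ∩ I) < ∞ := by
          refine markov _ ?_ inter_subset_right
          rintro a ⟨⟨ha1, -⟩, -⟩
          simp only [mem_setOf_eq]
          have : ε / 2 ≤ a - x := by linarith
          calc ε / 2 ≤ a - x := this
            _ ≤ |a - x| := le_abs_self _
            _ = |x - a| := abs_sub_comm a x
        rw [hBI] at h
        exact hfin.ne h
    refine measure_mono_null ?_ (by rw [measure_union_null hA hB] :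
      μ (Set.Ico c (x - ε / 2) ∪ Set.Ico (x + ε / 2) (d + 1)) = 0)
    rintro a ⟨⟨hac, had⟩, hax⟩
    simp only [mem_setOf_eq] at hax
    rcases le_total a x with h | h
    · left
      constructor
      · exact hac
      · have : ε ≤ x - a := by
          rw [abs_of_nonneg (by linarith)] at hax; linarith
        linarith
    · right
      constructor
      · have : ε ≤ a - x := by
          rw [abs_of_nonpos (by linarith)] at hax; linarith
        linarith
      · linarith [had]
  -- conclude: integrand is a.e. zero
  have hae : ∀ᵐ a ∂(μ.restrict I), |x - a| = 0 := by
    have hcup : μ.restrict I {a | |x - a| ≠ 0} = 0 := by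
      have hsub : {a | |x - a| ≠ 0} ⊆ ⋃ n : ℕ, {a | 1 / (n + 1 : ℝ) ≤ |x - a|} := by
        intro a ha
        simp only [mem_setOf_eq, ne_eq] at ha
        have hpos : 0 < |x - a| := lt_of_le_of_ne (abs_nonneg _) (Ne.symm ha)
        obtain ⟨n, hn⟩ := exists_nat_one_div_lt hpos
        exact mem_iUnion.2 ⟨n, hn.le⟩
      refine measure_mono_null hsub ?_
      refine measure_iUnion_null fun n => ?_
      have hn : (0:ℝ) < 1 / (n + 1 : ℝ) := by positivity
      have := key _ hn
      rw [Measure.restrict_apply₀' measurableSet_Icc.nullMeasurableSet]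
      refine measure_mono_null ?_ this
      exact fun a ⟨h1, h2⟩ => ⟨h2, h1⟩
    rw [ae_iff]
    simpa using hcup
  calc ∫ a in I, |x - a| ∂μ = ∫ a in I, (0:ℝ) ∂μ := integral_congr_ae hae
    _ = 0 := integral_zero _ _

/-- Fubini step -/
lemma fubini_step (μ : Measure ℝ) [IsFiniteMeasure μ] {c x : ℝ}
    (hge : ∀ᵐ a ∂μ, c ≤ a) :
    ∫⁻ t in Set.Ioc c x, μ (Set.Ico c t) = ∫⁻ a, ENNReal.ofReal (x - a) ∂μ := by
  set S : Set (ℝ × ℝ) := {p | c ≤ p.2 ∧ p.2 < p.1} with hS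
  have hSm : MeasurableSet S := by
    refine MeasurableSet.inter ?_ ?_
    · exact measurableSet_le measurable_const measurable_snd
    · exact measurableSet_lt measurable_snd measurable_fst
  have hFm : Measurable (S.indicator (fun _ => (1:ℝ≥0∞))) := measurable_const.indicator hSm
  have step1 : ∀ t : ℝ, μ (Set.Ico c t) = ∫⁻ a, S.indicator (fun _ => (1:ℝ≥0∞)) (t, a) ∂μ := by
    intro t
    rw [← lintegral_indicator_one measurableSet_Ico]
    refine lintegral_congr fun a => ?_
    by_cases h : c ≤ a ∧ a < t <;>
      simp [Set.indicator_apply, Set.mem_Ico, hS, h]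
  calc ∫⁻ t in Set.Ioc c x, μ (Set.Ico c t)
      = ∫⁻ t in Set.Ioc c x, ∫⁻ a, S.indicator (fun _ => (1:ℝ≥0∞)) (t, a) ∂μ :=
        lintegral_congr fun t => step1 t
    _ = ∫⁻ a, (∫⁻ t in Set.Ioc c x, S.indicator (fun _ => (1:ℝ≥0∞)) (t, a)) ∂μ := by
        exact lintegral_lintegral_swap
          (μ := volume.restrict (Set.Ioc c x)) (ν := μ)
          (f := fun t a => S.indicator (fun _ => (1:ℝ≥0∞)) (t, a))
          ((hFm.comp (measurable_fst.prodMk measurable_snd)).aemeasurable)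
    _ = ∫⁻ a, ENNReal.ofReal (x - a) ∂μ := by
        have hcong : (fun a : ℝ => ∫⁻ t in Set.Ioc c x, S.indicator (fun _ => (1:ℝ≥0∞)) (t, a))
            =ᵐ[μ] fun a => ENNReal.ofReal (x - a) := by
          filter_upwards [hge] with a ha
          have heq : ∀ t : ℝ, S.indicator (fun _ => (1:ℝ≥0∞)) (t, a)
              = (Set.Ioi a).indicator (fun _ => (1:ℝ≥0∞)) t := by
            intro t
            by_cases h : a < t <;>
              simp [Set.indicator_apply, hS, h, ha]
          simp only [heq]
          rw [lintegral_indicator measurableSet_Ioi, Measure.restrict_restrict measurableSet_Ioi]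
          have hset : Set.Ioi a ∩ Set.Ioc c x = Set.Ioc a x := by
            ext t
            simp only [mem_inter_iff, mem_Ioi, mem_Ioc]
            constructor
            · rintro ⟨h1, h2, h3⟩; exact ⟨h1, h3⟩
            · rintro ⟨h1, h2⟩; exact ⟨h1, lt_of_le_of_lt ha h1, h2⟩
          rw [hset, lintegral_one, Measure.restrict_apply_univ, Real.volume_Ioc]
        exact lintegral_congr_ae hcong

/-- a convex function with bounded right derivative and second-derivative
measure μ supported in a compact interval I can be represented as
f(x) = (1/2)∫_I |x−a| μ(da) + αx + β. -/
theorem convex_representation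
    (f : ℝ → ℝ) (hf : ConvexOn ℝ Set.univ f)
    (hbdd : ∃ M : ℝ, ∀ x, |rightDeriv f x| ≤ M)
    (μ : Measure ℝ)
    (hμ : ∀ a b : ℝ, a ≤ b → (μ (Set.Ico a b)).toReal = leftDeriv f b - leftDeriv f a)
    (I : Set ℝ) (hI : IsCompact I) (hIinterval : ∃ c d : ℝ, I = Set.Icc c d)
    (hsupp : μ Iᶜ = 0) :
    ∃ α β : ℝ, ∀ x : ℝ, f x = (1 / 2) * ∫ a in I, |x - a| ∂μ + α * x + β := by
  obtain ⟨M, hM⟩ := hbdd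
  obtain ⟨c, d, rfl⟩ := hIinterval
  set L := leftDeriv f with hLdef
  have hLmono : Monotone L := leftDeriv_mono hf
  have hmemI : ∀ᵐ a ∂μ, a ∈ Set.Icc c d := by
    rw [ae_iff]
    exact hsupp
  have hLc_le : ∀ t, t ≤ c → L t = L c := by
    intro t ht
    have h1 := hμ t c ht
    have h2 : μ (Set.Ico t c) = 0 := by
      refine measure_mono_null ?_ hsupp
      rintro a ⟨-, ha2⟩ ⟨hc, -⟩
      exact absurd hc (not_le.2 ha2)
    rw [h2] at h1
    simp only [ENNReal.toReal_zero] at h1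
    linarith
  by_cases hfin : μ (Set.Ico c (d + 1)) = ∞
  · -- degenerate case: L is constant
    have hcd : c < d + 1 := by
      by_contra hc
      rw [Set.Ico_eq_empty (not_lt.1 hc).not_gt] at hfin
      simp at hfin
    have hLdc : L (d + 1) = L c := by
      have := hμ c (d + 1) hcd.le
      rw [hfin] at this
      simp only [ENNReal.toReal_top] at this
      linarith
    have hconst : ∀ u, L u = L c := by
      intro u
      rcases le_total u c with h | h
      · exact hLc_le u h
      rcases le_total u (d + 1) with h2 | h2
      · exact le_antisymm (hLdc ▸ hLmono h2) (hLmono h)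
      · have hmono : μ (Set.Ico c u) = ∞ :=
          top_le_iff.1 (hfin ▸ measure_mono (Set.Ico_subset_Ico le_rfl h2))
        have := hμ c u (hcd.le.trans h2)
        rw [hmono] at this
        simp only [ENNReal.toReal_top] at this
        linarith
    have h0 : ∀ a b : ℝ, a ≤ b → μ (Set.Ico a b) = 0 ∨ μ (Set.Ico a b) = ∞ := by
      intro a b hab
      have := hμ a b hab
      rw [hconst a, hconst b, sub_self] at this
      exact ENNReal.toReal_eq_zero_iff _ |>.1 this
    refine ⟨L c, f c - L c * c, fun x => ?_⟩
    rw [degenerate_integral_zero μ h0 hsupp]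
    have hftc : f x - f c = L c * (x - c) := by
      rcases le_total c x with h | h
      · have hIL := ftc_leftDeriv hf hM h
        rw [intervalIntegral.integral_congr (g := fun _ => L c)
          (fun t _ => hconst t), intervalIntegral.integral_const] at hIL
        rw [← hIL]; simp [mul_comm]
      · have hIL := ftc_leftDeriv hf hM h
        rw [intervalIntegral.integral_congr (g := fun _ => L c)
          (fun t _ => hconst t), intervalIntegral.integral_const] at hIL
        have : (c - x) * L c = f c - f x := by simpa [smul_eq_mul] using hIL
        ring_nf
        nlinarith [this]
    ring_nf
    ring_nf at hftc
    linarith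
  · -- finite case
    haveI : IsFiniteMeasure μ := by
      constructor
      have hsub : (Set.univ : Set ℝ) ⊆ Set.Ico c (d + 1) ∪ (Set.Icc c d)ᶜ := by
        intro a _
        by_cases h : a ∈ Set.Icc c d
        · exact Or.inl ⟨h.1, by linarith [h.2]⟩
        · exact Or.inr h
      calc μ Set.univ ≤ μ (Set.Ico c (d + 1) ∪ (Set.Icc c d)ᶜ) := measure_mono hsub
        _ ≤ μ (Set.Ico c (d + 1)) + μ (Set.Icc c d)ᶜ := measure_union_le _ _
        _ = μ (Set.Ico c (d + 1)) := by rw [hsupp, add_zero]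
        _ < ∞ := lt_top_iff_ne_top.2 hfin
    set m := (μ Set.univ).toReal with hm
    have hkey : ∀ x : ℝ, f x = f c + L c * (x - c) + ∫ a, max (x - a) 0 ∂μ := by
      intro x
      rcases le_or_gt c x with hcx | hcx
      · have hIL : ∫ t in c..x, L t = f x - f c := ftc_leftDeriv hf hM hcx
        have hLint : IntervalIntegrable L volume c x := by
          have hIcc : IntegrableOn L (Set.Icc c x) volume := by
            have hconst : IntegrableOn (fun _ : ℝ => M) (Set.Icc c x) volume :=
              integrableOn_const measure_Icc_lt_top.ne
            exact hconst.mono' (hLmono.measurable.aestronglyMeasurable.restrict)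
              (Eventually.of_forall fun t => by
                simpa [Real.norm_eq_abs] using abs_leftDeriv_le hf hM t)
          exact (intervalIntegrable_iff_integrableOn_Icc_of_le hcx).2 hIcc
        have hsplit : ∫ t in c..x, (L t - L c) = (f x - f c) - L c * (x - c) := by
          rw [intervalIntegral.integral_sub hLint intervalIntegrable_const, hIL,
            intervalIntegral.integral_const]
          simp [smul_eq_mul]; ring
        have hof : ∀ t, c ≤ t → μ (Set.Ico c t) = ENNReal.ofReal (L t - L c) := by
          intro t ht
          rw [← hμ c t ht, ENNReal.ofReal_toReal (measure_ne_top μ _)]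
        have e1 : ∫ t in c..x, (L t - L c)
            = (∫⁻ t in Set.Ioc c x, ENNReal.ofReal (L t - L c)).toReal := by
          rw [intervalIntegral.integral_of_le hcx]
          rw [integral_eq_lintegral_of_nonneg_ae ?_ ?_]
          · filter_upwards [ae_restrict_mem measurableSet_Ioc] with t ht
            exact sub_nonneg.2 (hLmono ht.1.le)
          · exact ((hLmono.measurable.sub measurable_const).aestronglyMeasurable).restrict
        have e2 : ∫⁻ t in Set.Ioc c x, ENNReal.ofReal (L t - L c)
            = ∫⁻ t in Set.Ioc c x, μ (Set.Ico c t) :=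
          setLIntegral_congr_fun measurableSet_Ioc
            (fun t ht => (hof t ht.1.le).symm)
        have e3 : ∫⁻ t in Set.Ioc c x, μ (Set.Ico c t) = ∫⁻ a, ENNReal.ofReal (x - a) ∂μ :=
          fubini_step μ (hmemI.mono fun a ha => ha.1)
        have hmeas : AEStronglyMeasurable (fun a : ℝ => max (x - a) 0) μ :=
          Continuous.aestronglyMeasurable (by continuity)
        have hnn : 0 ≤ᵐ[μ] fun a : ℝ => max (x - a) 0 :=
          Eventually.of_forall fun a => le_max_right _ _
        have e4 : ∫ a, max (x - a) 0 ∂μ = (∫⁻ a, ENNReal.ofReal (x - a) ∂μ).toReal := by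
          rw [integral_eq_lintegral_of_nonneg_ae hnn hmeas]
          congr 1
          refine lintegral_congr fun a => ?_
          rcases le_total (x - a) 0 with h | h
          · simp [max_eq_right h, ENNReal.ofReal_of_nonpos h]
          · simp [max_eq_left h]
        have hcomb : (f x - f c) - L c * (x - c) = ∫ a, max (x - a) 0 ∂μ := by
          rw [← hsplit, e1, e2, e3, ← e4]
        linarith
      · have hIL : ∫ t in x..c, L t = f c - f x := ftc_leftDeriv hf hM hcx.le
        have hconstI : ∀ t ∈ Set.uIcc x c, L t = L c := by
          intro t ht
          refine hLc_le t ?_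
          have := ht.2
          rwa [max_eq_right hcx.le] at this
        rw [intervalIntegral.integral_congr hconstI, intervalIntegral.integral_const] at hIL
        have hP0 : ∫ a, max (x - a) 0 ∂μ = 0 := by
          have hz : ∀ᵐ a ∂μ, max (x - a) 0 = 0 :=
            hmemI.mono fun a ha => max_eq_right (by linarith [ha.1])
          rw [integral_congr_ae hz, integral_zero]
        rw [hP0]
        have : (c - x) * L c = f c - f x := by simpa [smul_eq_mul] using hIL
        nlinarith [this]
    -- integrability
    have hint_abs : ∀ x : ℝ, Integrable (fun a => |x - a|) μ := by
      intro x
      have hmeas2 : AEStronglyMeasurable (fun a : ℝ => |x - a|) μ :=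
        Continuous.aestronglyMeasurable (by continuity)
      refine (integrable_const (|x| + (|c| + |d|))).mono' hmeas2 ?_
      filter_upwards [hmemI] with a ha
      have h1 : |a| ≤ |c| + |d| := by
        rcases abs_le.1 (le_refl |c|) with _
        rw [abs_le]
        constructor
        · have := ha.1; have := neg_abs_le c; linarith [abs_nonneg d]
        · have := ha.2; have := le_abs_self d; linarith [abs_nonneg c]
      have : |x - a| ≤ |x| + |a| := abs_sub _ _
      simp only [Real.norm_eq_abs, abs_abs]
      linarith
    have hint_id : Integrable (fun a : ℝ => a) μ := by
      refine (integrable_const (|c| + |d|)).mono'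
        measurable_id.aestronglyMeasurable ?_
      filter_upwards [hmemI] with a ha
      simp only [Real.norm_eq_abs, id]
      rw [abs_le]
      constructor
      · have := ha.1; have := neg_abs_le c; linarith [abs_nonneg d]
      · have := ha.2; have := le_abs_self d; linarith [abs_nonneg c]
    refine ⟨L c + m / 2, f c - L c * c - (1 / 2) * ∫ a, a ∂μ, fun x => ?_⟩
    have hsetint : ∫ a in Set.Icc c d, |x - a| ∂μ = ∫ a, |x - a| ∂μ := by
      rw [Measure.restrict_eq_self_of_ae_mem hmemI]
    have hint_sub : Integrable (fun a : ℝ => x - a) μ := (integrable_const x).sub hint_id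
    have hmax : ∀ a : ℝ, max (x - a) 0 = (|x - a| + (x - a)) / 2 := by
      intro a
      rcases le_total (x - a) 0 with h | h
      · rw [max_eq_right h, abs_of_nonpos h]; ring
      · rw [max_eq_left h, abs_of_nonneg h]; ring
    have hPval : ∫ a, max (x - a) 0 ∂μ
        = (1 / 2) * ∫ a, |x - a| ∂μ + (1 / 2) * (x * m - ∫ a, a ∂μ) := by
      have : ∀ a : ℝ, max (x - a) 0 = (|x - a| + (x - a)) / 2 := hmax
      calc ∫ a, max (x - a) 0 ∂μ = ∫ a, (|x - a| + (x - a)) / 2 ∂μ := by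
            exact integral_congr_ae (Eventually.of_forall fun a => hmax a)
        _ = (∫ a, |x - a| + (x - a) ∂μ) / 2 := by rw [integral_div]
        _ = ((∫ a, |x - a| ∂μ) + ∫ a, (x - a) ∂μ) / 2 := by
            rw [integral_add (hint_abs x) hint_sub]
        _ = ((∫ a, |x - a| ∂μ) + (x * m - ∫ a, a ∂μ)) / 2 := by
            rw [integral_sub (integrable_const x) hint_id, integral_const]
            simp [smul_eq_mul, hm, mul_comm, measureReal_def]
        _ = (1 / 2) * ∫ a, |x - a| ∂μ + (1 / 2) * (x * m - ∫ a, a ∂μ) := by ring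
    have := hkey x
    rw [hPval] at this
    rw [hsetint]
    linarith [this]
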